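/- There is an absolute constant C such that for all real x ≥ 2 and y ≥ 1: ∑_{2 < p ≤ x, p prime} |∑_{1 ≤ a ≤ y} (a/p)| ≤ C·x^{3/2}, where (a/p) is the Legendre symbol. -/

import Mathlib

open Finset Complex

lemma sin_bound_aux (p m : ℕ) (h1 : 1 ≤ m) (h2 : m < p) :
    2 / (2 * Real.sin (Real.pi * m / p)) ≤ ((p:ℝ)/2) * (1/m + 1/((p:ℝ) - m)) := by
  have hp0 : (0:ℝ) < p := by
    have : 0 < p := by omega
    exact_mod_cast this
  have hm0 : (0:ℝ) < m := by exact_mod_cast h1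
  have hmp : (m:ℝ) < p := by exact_mod_cast h2
  have hpm : (0:ℝ) < (p:ℝ) - m := by linarith
  have hθ0 : 0 < Real.pi * m / p := by positivity
  have hθπ : Real.pi * m / p < Real.pi := by
    rw [div_lt_iff₀ hp0]
    have := Real.pi_pos
    nlinarith
  have hs0 : 0 < Real.sin (Real.pi * m / p) := Real.sin_pos_of_pos_of_lt_pi hθ0 hθπ
  have main : ∀ k : ℝ, 0 < k → 2 * k / p ≤ Real.sin (Real.pi * m / p) →
      1 / k ≤ 1/(m:ℝ) + 1/((p:ℝ) - m) →
      2 / (2 * Real.sin (Real.pi * m / p)) ≤ ((p:ℝ)/2) * (1/m + 1/((p:ℝ) - m)) := by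
    intro k hk hks hk1
    have h1' : 2 / (2 * Real.sin (Real.pi * m / p)) = 1 / Real.sin (Real.pi * m / p) := by
      field_simp
    rw [h1']
    have h2' : 1 / Real.sin (Real.pi * m / p) ≤ 1 / (2 * k / p) :=
      one_div_le_one_div_of_le (by positivity) hks
    refine h2'.trans ?_
    have : 1 / (2 * k / p) = (p/2) * (1/k) := by field_simp
    rw [this]
    have hp2 : (0:ℝ) ≤ p/2 := by positivity
    exact mul_le_mul_of_nonneg_left hk1 hp2
  rcases le_total (2*(m:ℝ)) p with h | h
  · refine main m hm0 ?_ ?_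
    · have hle : Real.pi * m / p ≤ Real.pi / 2 := by
        rw [div_le_div_iff₀ hp0 two_pos]
        have := Real.pi_pos; nlinarith
      have := Real.mul_le_sin (le_of_lt hθ0) hle
      calc 2 * (m:ℝ)/p = 2 / Real.pi * (Real.pi * m / p) := by
            have := Real.pi_pos; field_simp
        _ ≤ _ := this
    · have : (0:ℝ) < 1/((p:ℝ)-m) := by positivity
      linarith
  · refine main ((p:ℝ) - m) hpm ?_ ?_
    · have hsymm : Real.sin (Real.pi * m / p) = Real.sin (Real.pi * ((p:ℝ)-m) / p) := by
        rw [← Real.sin_pi_sub]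
        congr 1
        field_simp
      have hle : Real.pi * ((p:ℝ)-m) / p ≤ Real.pi / 2 := by
        rw [div_le_div_iff₀ hp0 two_pos]
        have := Real.pi_pos; nlinarith
      have h0' : 0 ≤ Real.pi * ((p:ℝ)-m) / p := by positivity
      have := Real.mul_le_sin h0' hle
      rw [hsymm]
      calc 2 * ((p:ℝ)-m)/p = 2 / Real.pi * (Real.pi * ((p:ℝ)-m) / p) := by
            have := Real.pi_pos; field_simp
        _ ≤ _ := this
    · have : (0:ℝ) < 1/(m:ℝ) := by positivity
      linarith

lemma abs_exp_mul_I_sub_one (θ : ℝ) :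
    ‖Complex.exp (θ * I) - 1‖ = 2 * |Real.sin (θ / 2)| := by
  have h : ‖Complex.exp (θ * I) - 1‖ ^ 2 = (2 * |Real.sin (θ / 2)|) ^ 2 := by
    rw [Complex.sq_norm, Complex.exp_mul_I]
    have : (Complex.cos θ + Complex.sin θ * I - 1) =
        Complex.mk (Real.cos θ - 1) (Real.sin θ) := by
      apply Complex.ext <;> simp [Complex.cos_ofReal_re, Complex.sin_ofReal_re]
    rw [this, Complex.normSq_mk, mul_pow, _root_.sq_abs]
    have hs := Real.sin_sq_eq_half_sub (θ / 2)
    have hc := Real.sin_sq_add_cos_sq θ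
    rw [show 2 * (θ/2) = θ by ring] at hs
    nlinarith
  have h1 : (0:ℝ) ≤ ‖Complex.exp (θ * I) - 1‖ := norm_nonneg _
  have h2 : (0:ℝ) ≤ 2 * |Real.sin (θ / 2)| := by positivity
  nlinarith [h, h1, h2]

section PV
variable (p : ℕ) [hp : Fact p.Prime]

lemma pv_core (hp2 : 2 < p) (N : ℕ) :
    |∑ a ∈ Finset.Icc 1 N, (jacobiSym (a : ℤ) p : ℝ)| ≤ Real.sqrt p * (1 + Real.log p) := by
  have hp0 : p ≠ 0 := hp.out.ne_zero
  have hpR : (0:ℝ) < p := by positivity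
  have hchar : ringChar (ZMod p) ≠ 2 := by
    rw [ZMod.ringChar_zmod_n]; omega
  set ζ : ℂ := Complex.exp (2 * Real.pi * I / p) with hζdef
  have hprim : IsPrimitiveRoot ζ p := Complex.isPrimitiveRoot_exp p hp0
  have hζp : ζ ^ p = 1 := hprim.pow_eq_one
  set ψ : AddChar (ZMod p) ℂ := AddChar.zmodChar p hζp with hψdef
  have hψprim : ψ.IsPrimitive := AddChar.zmodChar_primitive_of_primitive_root p hprim
  set χ : MulChar (ZMod p) ℂ := (quadraticChar (ZMod p)).ringHomComp (Int.castRingHom ℂ) with hχdef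
  have hχ1 : χ ≠ 1 :=
    (MulChar.ringHomComp_ne_one_iff Int.cast_injective).mpr (quadraticChar_ne_one hchar)
  have hχq : χ.IsQuadratic := (quadraticChar_isQuadratic (ZMod p)).comp _
  set g : ℂ := gaussSum χ ψ with hgdef
  have hcard : (Fintype.card (ZMod p) : ℂ) ≠ 0 := by
    rw [ZMod.card]
    exact_mod_cast (Nat.cast_ne_zero (R := ℂ)).mpr hp0
  have hg0 : g ≠ 0 := gaussSum_ne_zero_of_nontrivial hcard hχ1 hψprim
  have habsg : ‖g‖ = Real.sqrt p := by
    have hsq : g ^ 2 = χ (-1) * p := by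
      rw [hgdef, gaussSum_sq hχ1 hχq hψprim, ZMod.card]
    have h1 : ‖χ (-1)‖ = 1 := by
      rcases hχq (-1) with h | h | h
      · exfalso; apply hg0
        have : g ^ 2 = 0 := by rw [hsq, h, zero_mul]
        exact pow_eq_zero_iff (n := 2) (by norm_num) |>.mp this
      · rw [h]; simp
      · rw [h]; simp
    have habs2 : (‖g‖) ^ 2 = p := by
      calc (‖g‖)^2 = ‖g^2‖ := (norm_pow g 2).symm
        _ = ‖χ (-1)‖ * ‖(p:ℂ)‖ := by rw [hsq, norm_mul]
        _ = p := by rw [h1, one_mul, Complex.norm_natCast]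
    rw [← habs2, Real.sqrt_sq (norm_nonneg g)]
  -- key identity
  have key : ∀ t : ZMod p, χ t * g = ∑ u : ZMod p, χ u * ψ (t * u) := by
    intro t
    by_cases ht : t = 0
    · subst ht
      rw [MulChar.map_zero, zero_mul]
      have : ∀ u : ZMod p, ψ ((0:ZMod p) * u) = 1 := by
        intro u; rw [zero_mul, AddChar.map_zero_eq_one]
      simp only [this, mul_one]
      exact (MulChar.sum_eq_zero_of_ne_one hχ1).symm
    · have hu : IsUnit t := isUnit_iff_ne_zero.mpr ht
      obtain ⟨u, rfl⟩ := hu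
      have h1 := gaussSum_mulShift χ ψ u
      have hne : χ u ≠ 0 := by
        intro h0
        apply hg0
        rw [hgdef, ← h1, h0, zero_mul]
      have h2 : χ ↑u * χ ↑u = 1 := by
        rcases hχq u with h | h | h
        · exact absurd h hne
        · rw [h]; norm_num
        · rw [h]; norm_num
      calc χ ↑u * g = χ ↑u * (χ ↑u * gaussSum χ (ψ.mulShift u)) := by rw [h1]
        _ = gaussSum χ (ψ.mulShift u) := by rw [← mul_assoc, h2, one_mul]
        _ = ∑ v, χ v * ψ (↑u * v) := by
            simp only [gaussSum, AddChar.mulShift_apply]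
  -- rewrite the target sum as a complex character sum
  set T : ℝ := ∑ a ∈ Finset.Icc 1 N, (jacobiSym (a:ℤ) p : ℝ) with hT
  set S : ℂ := ∑ a ∈ Finset.Icc 1 N, χ ((a : ZMod p)) with hSdef
  have hterm : ∀ a : ℕ, χ ((a : ZMod p)) = ((jacobiSym (a:ℤ) p : ℤ) : ℂ) := by
    intro a
    rw [← jacobiSym.legendreSym.to_jacobiSym, legendreSym]
    simp [hχdef, MulChar.ringHomComp_apply]
  have hST : S = (T : ℂ) := by
    rw [hSdef, hT]
    push_cast
    exact Finset.sum_congr rfl fun a _ => by rw [hterm a]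
  have habsST : ‖S‖ = |T| := by rw [hST, Complex.norm_real, Real.norm_eq_abs]
  -- swap sums
  have hSg : S * g = ∑ u : ZMod p, χ u * ∑ a ∈ Finset.Icc 1 N, ψ ((a : ZMod p) * u) := by
    rw [hSdef, Finset.sum_mul]
    simp_rw [key, Finset.mul_sum]
    rw [Finset.sum_comm]
  have hζ' : ζ = Complex.exp (((2*Real.pi/p : ℝ) : ℂ) * I) := by
    rw [hζdef]; congr 1; push_cast; ring
  -- inner geometric sum estimate
  have hinner : ∀ u : ZMod p, u ≠ 0 →
      ‖∑ a ∈ Finset.Icc 1 N, ψ ((a : ZMod p) * u)‖ ≤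
        ((p:ℝ)/2) * (1/(u.val:ℝ) + 1/((p:ℝ) - u.val)) := by
    intro u hu
    have hm1 : 1 ≤ u.val := by
      rcases Nat.eq_zero_or_pos u.val with h | h
      · exact absurd ((ZMod.val_eq_zero u).mp h) hu
      · exact h
    have hmp : u.val < p := ZMod.val_lt u
    set z : ℂ := ζ ^ u.val with hz
    have hz1 : z ≠ 1 := hprim.pow_ne_one_of_pos_of_lt (by omega) hmp
    have habsz : ‖z‖ = 1 := by
      rw [hz, norm_pow, hζ', Complex.norm_exp_ofReal_mul_I, one_pow]
    have hψa : ∀ a : ℕ, ψ ((a : ZMod p) * u) = z ^ a := by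
      intro a
      have h1 : (a : ZMod p) * u = ((a * u.val : ℕ) : ZMod p) := by
        push_cast
        rw [ZMod.natCast_rightInverse u]
      rw [h1, hψdef, AddChar.zmodChar_apply' hζp, hz, mul_comm a, pow_mul]
    have hgeom : ∑ a ∈ Finset.Icc 1 N, ψ ((a : ZMod p) * u)
        = (z^(N+1) - z^1)/(z - 1) := by
      simp_rw [hψa]
      rw [← Finset.Ico_add_one_right_eq_Icc, geom_sum_Ico hz1 (by omega)]
    have habsz1 : ‖z - 1‖ = 2 * Real.sin (Real.pi * u.val / p) := by
      have hzexp : z = Complex.exp (((2*Real.pi*u.val/p : ℝ) : ℂ) * I) := by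
        rw [hz, hζ', ← Complex.exp_nat_mul]
        congr 1
        push_cast
        ring
      rw [hzexp, abs_exp_mul_I_sub_one]
      rw [show (2*Real.pi*u.val/p)/2 = Real.pi * u.val / p by ring]
      congr 1
      have hpR' : (0:ℝ) < p := hpR
      have h0 : 0 < Real.pi * u.val / p := by
        have : (0:ℝ) < u.val := by exact_mod_cast hm1
        positivity
      have hπ : Real.pi * u.val / p < Real.pi := by
        rw [div_lt_iff₀ hpR']
        have : (u.val : ℝ) < p := by exact_mod_cast hmp
        nlinarith [Real.pi_pos]
      exact abs_of_pos (Real.sin_pos_of_pos_of_lt_pi h0 hπ)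
    have hpos : 0 < ‖z - 1‖ := norm_pos_iff.mpr (sub_ne_zero.mpr hz1)
    have hb1 : ‖∑ a ∈ Finset.Icc 1 N, ψ ((a : ZMod p) * u)‖
        ≤ 2 / ‖z - 1‖ := by
      rw [hgeom, norm_div]
      have e1 : ‖z^(N+1)‖ = 1 := by rw [norm_pow, habsz, one_pow]
      have e2 : ‖z^1‖ = 1 := by rw [pow_one, habsz]
      have hnum : ‖z^(N+1) - z^1‖ ≤ 2 := by
        calc ‖z^(N+1) - z^1‖ ≤ ‖z^(N+1)‖ + ‖z^1‖ :=
              norm_sub_le _ _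
          _ = 2 := by rw [e1, e2]; norm_num
      gcongr
    calc ‖∑ a ∈ Finset.Icc 1 N, ψ ((a : ZMod p) * u)‖
        ≤ 2 / ‖z - 1‖ := hb1
      _ = 2 / (2 * Real.sin (Real.pi * u.val / p)) := by rw [habsz1]
      _ ≤ ((p:ℝ)/2) * (1/(u.val:ℝ) + 1/((p:ℝ) - u.val)) := sin_bound_aux p u.val hm1 hmp
  have hχabs : ∀ u : ZMod p, ‖χ u‖ ≤ 1 := by
    intro u
    rcases hχq u with h | h | h <;> rw [h] <;> simp
  classical
  have hdrop : ‖S * g‖ ≤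
      ∑ u ∈ Finset.univ.erase (0 : ZMod p), ((p:ℝ)/2) * (1/(u.val:ℝ) + 1/((p:ℝ) - u.val)) := by
    rw [hSg]
    calc ‖∑ u : ZMod p, χ u * ∑ a ∈ Finset.Icc 1 N, ψ ((a:ZMod p) * u)‖
        ≤ ∑ u : ZMod p, ‖χ u * ∑ a ∈ Finset.Icc 1 N, ψ ((a:ZMod p) * u)‖ :=
          norm_sum_le _ _
      _ = ∑ u ∈ Finset.univ.erase 0,
            ‖χ u * ∑ a ∈ Finset.Icc 1 N, ψ ((a:ZMod p)*u)‖ := by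
          rw [← Finset.sum_erase_add _ _ (Finset.mem_univ (0 : ZMod p))]
          rw [MulChar.map_zero, zero_mul, norm_zero, add_zero]
      _ ≤ _ := by
          refine Finset.sum_le_sum fun u hu => ?_
          have hu0 : u ≠ 0 := Finset.ne_of_mem_erase hu
          rw [norm_mul]
          calc ‖χ u‖ * ‖∑ a ∈ Finset.Icc 1 N, ψ ((a:ZMod p)*u)‖
              ≤ 1 * (((p:ℝ)/2) * (1/(u.val:ℝ) + 1/((p:ℝ) - u.val))) := by
                apply mul_le_mul (hχabs u) (hinner u hu0) (norm_nonneg _)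
                norm_num
            _ = _ := one_mul _
  have hreindex :
      ∑ u ∈ Finset.univ.erase (0 : ZMod p), ((p:ℝ)/2) * (1/(u.val:ℝ) + 1/((p:ℝ) - u.val))
      = ∑ m ∈ Finset.Ico 1 p, ((p:ℝ)/2) * (1/(m:ℝ) + 1/((p:ℝ) - m)) := by
    refine Finset.sum_nbij' (i := fun u => u.val) (j := fun m => (m : ZMod p)) ?_ ?_ ?_ ?_ ?_
    · intro u hu
      have hu0 : u ≠ 0 := Finset.ne_of_mem_erase hu
      have h1 : 1 ≤ u.val := by
        rcases Nat.eq_zero_or_pos u.val with h | h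
        · exact absurd ((ZMod.val_eq_zero u).mp h) hu0
        · exact h
      exact Finset.mem_Ico.mpr ⟨h1, ZMod.val_lt u⟩
    · intro m hm
      obtain ⟨h1, h2⟩ := Finset.mem_Ico.mp hm
      refine Finset.mem_erase.mpr ⟨?_, Finset.mem_univ _⟩
      rw [Ne, ZMod.natCast_eq_zero_iff]
      intro hdvd
      have := Nat.le_of_dvd (by omega) hdvd
      omega
    · intro u _
      exact ZMod.natCast_rightInverse u
    · intro m hm
      obtain ⟨h1, h2⟩ := Finset.mem_Ico.mp hm
      exact ZMod.val_natCast_of_lt h2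
    · intro u _
      rfl
  have hrefl : ∑ m ∈ Finset.Ico 1 p, (1/((p:ℝ) - m)) = ∑ m ∈ Finset.Ico 1 p, (1/(m:ℝ)) := by
    refine Finset.sum_nbij' (i := fun m => p - m) (j := fun m => p - m) ?_ ?_ ?_ ?_ ?_
    · intro m hm
      obtain ⟨h1, h2⟩ := Finset.mem_Ico.mp hm
      exact Finset.mem_Ico.mpr ⟨by omega, by omega⟩
    · intro m hm
      obtain ⟨h1, h2⟩ := Finset.mem_Ico.mp hm
      exact Finset.mem_Ico.mpr ⟨by omega, by omega⟩
    · intro m hm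
      obtain ⟨h1, h2⟩ := Finset.mem_Ico.mp hm
      omega
    · intro m hm
      obtain ⟨h1, h2⟩ := Finset.mem_Ico.mp hm
      omega
    · intro m hm
      obtain ⟨h1, h2⟩ := Finset.mem_Ico.mp hm
      congr 1
      have : ((p - m : ℕ) : ℝ) = (p:ℝ) - m := by
        push_cast [Nat.cast_sub (le_of_lt h2)]
        ring
      rw [this]
  have hHle : ∑ m ∈ Finset.Ico 1 p, (1/(m:ℝ)) ≤ 1 + Real.log p := by
    have h1 : ∑ m ∈ Finset.Ico 1 p, (1/(m:ℝ)) = (harmonic (p-1) : ℝ) := by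
      rw [harmonic]
      push_cast
      rw [Finset.sum_Ico_eq_sum_range]
      refine Finset.sum_congr rfl fun i _ => ?_
      rw [one_div]
      congr 1
      push_cast
      ring
    rw [h1]
    refine (harmonic_le_one_add_log (p-1)).trans ?_
    have hcast : ((p - 1 : ℕ) : ℝ) ≤ (p : ℝ) := by
      have : (p - 1 : ℕ) ≤ p := Nat.sub_le _ _
      exact_mod_cast this
    have hpos : (0:ℝ) < ((p - 1 : ℕ) : ℝ) := by
      have : 1 ≤ p - 1 := by omega
      exact_mod_cast Nat.lt_of_lt_of_le Nat.zero_lt_one this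
    have := Real.log_le_log hpos hcast
    linarith
  have htot : ∑ m ∈ Finset.Ico 1 p, ((p:ℝ)/2) * (1/(m:ℝ) + 1/((p:ℝ) - m))
      ≤ (p:ℝ) * (1 + Real.log p) := by
    have hsum : ∑ m ∈ Finset.Ico 1 p, ((p:ℝ)/2) * (1/(m:ℝ) + 1/((p:ℝ) - m))
        = ((p:ℝ)/2) * (∑ m ∈ Finset.Ico 1 p, (1/(m:ℝ))
            + ∑ m ∈ Finset.Ico 1 p, (1/((p:ℝ) - m))) := by
      rw [← Finset.sum_add_distrib, Finset.mul_sum]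
    rw [hsum, hrefl]
    have h2 : ((p:ℝ)/2) * (∑ m ∈ Finset.Ico 1 p, (1/(m:ℝ)) + ∑ m ∈ Finset.Ico 1 p, (1/(m:ℝ)))
        = (p:ℝ) * ∑ m ∈ Finset.Ico 1 p, (1/(m:ℝ)) := by ring
    rw [h2]
    exact mul_le_mul_of_nonneg_left hHle hpR.le
  have hfin : |T| * Real.sqrt p ≤ (p:ℝ) * (1 + Real.log p) := by
    rw [← habsST, ← habsg, ← norm_mul]
    exact ((hdrop.trans (le_of_eq hreindex)).trans htot)
  have hsqp : Real.sqrt p * Real.sqrt p = (p:ℝ) := Real.mul_self_sqrt hpR.le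
  have hs0 : 0 < Real.sqrt p := Real.sqrt_pos.mpr hpR
  nlinarith [hfin, hsqp, hs0, abs_nonneg T]

end PV

/-- Pólya–Vinogradov applied on average: `∑_{2<p≤x} |∑_{a≤y} (a/p)| ≪ x^{3/2}`.
Here `(a/p)` is the Legendre symbol, realized as the Jacobi symbol `jacobiSym a p`. -/
theorem legendre_sum_average_polya_vinogradov :
    ∃ C : ℝ, ∀ x y : ℝ, 2 ≤ x → 1 ≤ y →
      ∑ p ∈ (Finset.Ioc 2 ⌊x⌋₊).filter Nat.Prime,
          |∑ a ∈ Finset.Icc 1 ⌊y⌋₊, (jacobiSym (a : ℤ) p : ℝ)|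
        ≤ C * x ^ ((3 : ℝ) / 2) := by
  refine ⟨1 + Real.log 4, fun x y hx hy => ?_⟩
  have hx0 : (0:ℝ) < x := by linarith
  set n := ⌊x⌋₊ with hn
  have hnx : (n:ℝ) ≤ x := Nat.floor_le hx0.le
  set P := (Finset.Ioc 2 n).filter Nat.Prime with hP
  have hterm : ∀ p ∈ P, |∑ a ∈ Finset.Icc 1 ⌊y⌋₊, (jacobiSym (a : ℤ) p : ℝ)|
      ≤ Real.sqrt x * (1 + Real.log p) := by
    intro p hpP
    obtain ⟨hmem, hprime⟩ := Finset.mem_filter.mp hpP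
    obtain ⟨h2p, hpn⟩ := Finset.mem_Ioc.mp hmem
    haveI : Fact p.Prime := ⟨hprime⟩
    refine (pv_core p h2p ⌊y⌋₊).trans ?_
    have hpx : (p:ℝ) ≤ x := le_trans (by exact_mod_cast hpn) hnx
    have h1L : 0 ≤ 1 + Real.log p := by
      have h1 : (1:ℝ) ≤ p := by exact_mod_cast hprime.one_lt.le
      have := Real.log_nonneg h1
      linarith
    exact mul_le_mul_of_nonneg_right (Real.sqrt_le_sqrt hpx) h1L
  have hcard : (P.card : ℝ) ≤ x := by
    have h1 : P.card ≤ (Finset.Ioc 2 n).card := Finset.card_filter_le _ _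
    have h2 : (Finset.Ioc 2 n).card = n - 2 := Nat.card_Ioc 2 n
    have h3 : P.card ≤ n := by omega
    calc (P.card : ℝ) ≤ n := by exact_mod_cast h3
      _ ≤ x := hnx
  have hcheb : ∑ p ∈ P, Real.log p ≤ Real.log 4 * x := by
    have hsub : P ⊆ (Finset.range (n+1)).filter Nat.Prime := by
      intro p hpP
      obtain ⟨hmem, hprime⟩ := Finset.mem_filter.mp hpP
      obtain ⟨h2p, hpn⟩ := Finset.mem_Ioc.mp hmem
      exact Finset.mem_filter.mpr ⟨Finset.mem_range.mpr (by omega), hprime⟩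
    have hnonneg : ∀ p ∈ (Finset.range (n+1)).filter Nat.Prime, p ∉ P → 0 ≤ Real.log p := by
      intro p hp _
      have hprime := (Finset.mem_filter.mp hp).2
      exact Real.log_nonneg (by exact_mod_cast hprime.one_lt.le)
    have h1 : ∑ p ∈ P, Real.log p ≤ ∑ p ∈ (Finset.range (n+1)).filter Nat.Prime, Real.log p :=
      Finset.sum_le_sum_of_subset_of_nonneg hsub hnonneg
    have h2 : ∑ p ∈ (Finset.range (n+1)).filter Nat.Prime, Real.log p
        = Real.log (primorial n) := by
      rw [primorial]
      push_cast
      rw [Real.log_prod]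
      intro p hp
      have hprime := (Finset.mem_filter.mp hp).2
      have : (0:ℝ) < p := by exact_mod_cast hprime.pos
      exact ne_of_gt this
    have h3 : Real.log (primorial n) ≤ Real.log ((4:ℝ)^n) := by
      apply Real.log_le_log
      · exact_mod_cast primorial_pos n
      · exact_mod_cast primorial_le_4_pow n
    have h4 : Real.log ((4:ℝ)^n) = n * Real.log 4 := by rw [Real.log_pow]
    have h5 : (n:ℝ) * Real.log 4 ≤ x * Real.log 4 :=
      mul_le_mul_of_nonneg_right hnx (Real.log_nonneg (by norm_num))
    calc ∑ p ∈ P, Real.log p ≤ Real.log (primorial n) := h1.trans (le_of_eq h2)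
      _ ≤ (n:ℝ) * Real.log 4 := h3.trans (le_of_eq h4)
      _ ≤ x * Real.log 4 := h5
      _ = Real.log 4 * x := mul_comm _ _
  have hx32 : Real.sqrt x * x = x ^ ((3:ℝ)/2) := by
    have h1 : x ^ ((3:ℝ)/2) = x ^ ((1:ℝ)/2) * x ^ (1:ℝ) := by
      rw [← Real.rpow_add hx0]; norm_num
    rw [h1, Real.rpow_one, ← Real.sqrt_eq_rpow]
  calc ∑ p ∈ P, |∑ a ∈ Finset.Icc 1 ⌊y⌋₊, (jacobiSym (a : ℤ) p : ℝ)|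
      ≤ ∑ p ∈ P, Real.sqrt x * (1 + Real.log p) := Finset.sum_le_sum hterm
    _ = Real.sqrt x * ((P.card : ℝ) + ∑ p ∈ P, Real.log p) := by
        rw [← Finset.mul_sum, Finset.sum_add_distrib, Finset.sum_const, nsmul_eq_mul, mul_one]
    _ ≤ Real.sqrt x * (x + Real.log 4 * x) := by
        apply mul_le_mul_of_nonneg_left (add_le_add hcard hcheb) (Real.sqrt_nonneg x)
    _ = (1 + Real.log 4) * (Real.sqrt x * x) := by ring
    _ = (1 + Real.log 4) * x ^ ((3:ℝ)/2) := by rw [hx32]
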